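/- Let n ≥ 2 and 2 ≤ k ≤ n. If κ = (κ_1, …, κ_n) ∈ Γ_k and κ_i ≥ κ_j for two indices i, j, then σ_{k−1}(κ|i) ≤ σ_{k−1}(κ|j). In particular, if κ_1 ≥ κ_2 ≥ ⋯ ≥ κ_n, then σ_{k−1}(κ|1) ≤ σ_{k−1}(κ|i) for every i. -/

import Mathlib

open Finset

/-- The `k`-th elementary symmetric polynomial of `κ : Fin n → ℝ`. -/
noncomputable def esymm {n : ℕ} (k : ℕ) (κ : Fin n → ℝ) : ℝ :=
  ∑ s ∈ Finset.univ.powersetCard k, ∏ i ∈ s, κ i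

/-- `σ_k(κ|i)`: the `k`-th elementary symmetric polynomial of the tuple obtained
from `κ` by deleting the entry `κ i`. -/
noncomputable def esymmDel {n : ℕ} (k : ℕ) (κ : Fin n → ℝ) (i : Fin n) : ℝ :=
  ∑ s ∈ ({i}ᶜ : Finset (Fin n)).powersetCard k, ∏ j ∈ s, κ j

/-- `σ_k(κ|i,j)`: the `k`-th elementary symmetric polynomial of the tuple obtained
from `κ` by deleting the entries `κ i` and `κ j`. -/
noncomputable def esymmDel2 {n : ℕ} (k : ℕ) (κ : Fin n → ℝ) (i j : Fin n) : ℝ :=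
  ∑ s ∈ ({i, j}ᶜ : Finset (Fin n)).powersetCard k, ∏ l ∈ s, κ l

/-- The Garding cone `Γ_k = {κ : σ_j(κ) > 0 for all 1 ≤ j ≤ k}`. -/
def GardingCone {n : ℕ} (k : ℕ) : Set (Fin n → ℝ) :=
  {κ | ∀ j : ℕ, 1 ≤ j → j ≤ k → 0 < esymm j κ}


open Finset Polynomial
set_option linter.unusedSectionVars false
namespace Stmt8Aux

variable {ι : Type} [DecidableEq ι]

noncomputable def E (s : Finset ι) (k : ℕ) (κ : ι → ℝ) : ℝ :=
  ∑ t ∈ s.powersetCard k, ∏ i ∈ t, κ i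

lemma E_zero (s : Finset ι) (κ : ι → ℝ) : E s 0 κ = 1 := by
  simp [E, Finset.powersetCard_zero]

lemma E_of_card_lt {s : Finset ι} {k : ℕ} (h : s.card < k) (κ : ι → ℝ) : E s k κ = 0 := by
  simp [E, Finset.powersetCard_eq_empty.2 h]

lemma le_card_of_E_pos {s : Finset ι} {k : ℕ} {κ : ι → ℝ} (h : 0 < E s k κ) : k ≤ s.card := by
  by_contra hc
  rw [E_of_card_lt (by omega)] at h
  exact lt_irrefl _ h

/-- Vieta for `E`. -/
lemma coeff_P {s : Finset ι} (κ : ι → ℝ) {j : ℕ} (hj : j ≤ s.card) :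
    (∏ i ∈ s, (X + C (κ i))).coeff (s.card - j) = E s j κ := by
  rw [Finset.prod_X_add_C_coeff _ _ (Nat.sub_le _ _), Nat.sub_sub_self hj, E]

lemma natDegree_P (s : Finset ι) (κ : ι → ℝ) :
    (∏ i ∈ s, (X + C (κ i))).natDegree = s.card := by
  rw [Polynomial.natDegree_prod _ _ fun i _ => (monic_X_add_C (κ i)).ne_zero]
  simp [natDegree_X_add_C]

def G (s : Finset ι) (k : ℕ) (κ : ι → ℝ) : Prop := ∀ j, 1 ≤ j → j ≤ k → 0 < E s j κ

lemma G_mono {s : Finset ι} {k m : ℕ} {κ : ι → ℝ} (h : G s k κ) (hm : m ≤ k) : G s m κ :=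
  fun j h1 h2 => h j h1 (h2.trans hm)

lemma G_shift {s : Finset ι} {K : ℕ} {κ : ι → ℝ} (hG : G s K κ) {t : ℝ} (ht : 0 ≤ t) :
    G s K (fun i => κ i + t) := by
  intro j hj1 hjK
  have hjc : j ≤ s.card := le_card_of_E_pos (hG j hj1 hjK)
  set m := s.card with hm
  set P : ℝ[X] := ∏ i ∈ s, (X + C (κ i)) with hP
  have hcomp : ∏ i ∈ s, (X + C (κ i + t)) = P.comp (X + C t) := by
    rw [hP, Polynomial.prod_comp]
    refine Finset.prod_congr rfl fun i _ => ?_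
    rw [Polynomial.add_comp, Polynomial.X_comp, Polynomial.C_comp, C_add]
    ring
  have hE : E s j (fun i => κ i + t) = (hasseDeriv (m - j) P).eval t := by
    rw [← coeff_P (fun i => κ i + t) hjc, hcomp, ← taylor_apply, taylor_coeff]
  rw [hE]
  set Q := hasseDeriv (m - j) P with hQ
  have hcoeff : ∀ i : ℕ, Q.coeff i = (i + (m - j)).choose (m - j) * P.coeff (i + (m - j)) :=
    fun i => hasseDeriv_coeff _ _ i
  have hnn : ∀ i : ℕ, 0 ≤ Q.coeff i := by
    intro i
    rw [hcoeff i]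
    rcases le_or_gt i j with hij | hij
    · have harith : i + (m - j) = m - (j - i) := by omega
      have : P.coeff (i + (m - j)) = E s (j - i) κ := by
        rw [harith, coeff_P κ (by omega)]
      rw [this]
      rcases eq_or_lt_of_le hij with rfl | hlt
      · simp [E_zero]
      · exact mul_nonneg (by positivity) (hG (j - i) (by omega) (by omega)).le
    · have : P.natDegree < i + (m - j) := by rw [hP, natDegree_P]; omega
      rw [coeff_eq_zero_of_natDegree_lt this, mul_zero]
  have h0 : Q.coeff 0 = E s j κ := by
    rw [hcoeff 0, Nat.zero_add, Nat.choose_self, Nat.cast_one, one_mul,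
      show m - j = m - j from rfl]
    exact coeff_P κ hjc
  have : 0 < Q.eval t := by
    rw [Polynomial.eval_eq_sum_range]
    have h0mem : 0 ∈ Finset.range (Q.natDegree + 1) := Finset.mem_range.2 (Nat.succ_pos _)
    calc (0:ℝ) < Q.coeff 0 * t ^ 0 := by
          rw [pow_zero, mul_one, h0]; exact hG j hj1 hjK
      _ ≤ ∑ i ∈ Finset.range (Q.natDegree + 1), Q.coeff i * t ^ i := by
          refine Finset.single_le_sum (fun i _ => mul_nonneg (hnn i) (pow_nonneg ht i)) h0mem
  exact this

lemma E_insert {i : ι} {s : Finset ι} (h : i ∉ s) (k : ℕ) (κ : ι → ℝ) :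
    E (insert i s) (k + 1) κ = E s (k + 1) κ + κ i * E s k κ := by
  classical
  rw [E, Finset.powersetCard_succ_insert h, Finset.sum_union, Finset.sum_image]
  · congr 1
    rw [E, Finset.mul_sum]
    refine Finset.sum_congr rfl fun t ht => ?_
    have hit : i ∉ t := fun hit => h ((Finset.mem_powersetCard.1 ht).1 hit)
    rw [Finset.prod_insert hit]
  · intro t ht u hu htu
    have hit : i ∉ t := fun hit => h ((Finset.mem_powersetCard.1 ht).1 hit)
    have hiu : i ∉ u := fun hiu => h ((Finset.mem_powersetCard.1 hu).1 hiu)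
    have := congrArg (Finset.erase · i) htu
    simpa [Finset.erase_insert hit, Finset.erase_insert hiu] using this
  · rw [Finset.disjoint_right]
    rintro t ht hts
    simp only [Finset.mem_image] at ht
    obtain ⟨u, hu, rfl⟩ := ht
    have : i ∈ s := (Finset.mem_powersetCard.1 hts).1 (Finset.mem_insert_self i u)
    exact h this

lemma E_pos {s : Finset ι} {k : ℕ} {κ : ι → ℝ} (hpos : ∀ i ∈ s, 0 < κ i)
    (hk : k ≤ s.card) : 0 < E s k κ := by
  refine Finset.sum_pos (fun t ht => Finset.prod_pos fun i hi => hpos i ?_) ?_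
  · exact (Finset.mem_powersetCard.1 ht).1 hi
  · exact Finset.powersetCard_nonempty.2 hk

lemma E_nonneg {s : Finset ι} {k : ℕ} {κ : ι → ℝ} (hpos : ∀ i ∈ s, 0 < κ i) :
    0 ≤ E s k κ := by
  refine Finset.sum_nonneg fun t ht => Finset.prod_nonneg fun i hi =>
    (hpos i ((Finset.mem_powersetCard.1 ht).1 hi)).le

lemma E_one (s : Finset ι) (κ : ι → ℝ) : E s 1 κ = ∑ i ∈ s, κ i := by
  classical
  induction s using Finset.induction with
  | empty => rw [E_of_card_lt (s := ∅) (k := 1) (by simp) κ]; simp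
  | @insert a s h ih =>
    rw [show (1 : ℕ) = 0 + 1 from rfl] at ih ⊢
    rw [E_insert h, ih, E_zero, Finset.sum_insert h]; ring

lemma E_two (s : Finset ι) (κ : ι → ℝ) :
    2 * E s 2 κ = (∑ i ∈ s, κ i) ^ 2 - ∑ i ∈ s, κ i ^ 2 := by
  classical
  induction s using Finset.induction with
  | empty => rw [E_of_card_lt (s := ∅) (k := 2) (by simp) κ]; simp
  | @insert a s h ih =>
    rw [show (2 : ℕ) = 1 + 1 from rfl, E_insert h, E_one, Finset.sum_insert h,
      Finset.sum_insert h]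
    rw [show (1:ℕ)+1 = 2 from rfl, mul_add, ih]
    ring







/-- real-rootedness -/
def RR (p : ℝ[X]) : Prop := Multiset.card p.roots = p.natDegree

lemma RR_derivative {p : ℝ[X]} (h : RR p) :
    RR (derivative p) ∧ (derivative p).natDegree = p.natDegree - 1 := by
  rcases eq_or_ne p.natDegree 0 with hd | hd
  · rw [derivative_of_natDegree_zero hd]
    constructor
    · simp [RR]
    · simp [hd]
  · have h1 : Multiset.card p.roots ≤ Multiset.card (derivative p).roots + 1 :=
      p.card_roots_le_derivative
    have h2 : Multiset.card (derivative p).roots ≤ (derivative p).natDegree :=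
      (derivative p).card_roots'
    have h3 : (derivative p).natDegree ≤ p.natDegree - 1 := natDegree_derivative_le p
    have h4 : 1 ≤ p.natDegree := Nat.one_le_iff_ne_zero.2 hd
    rw [RR] at h ⊢
    omega

lemma RR_iterate {p : ℝ[X]} (h : RR p) (c : ℕ) :
    RR (derivative^[c] p) ∧ (derivative^[c] p).natDegree = p.natDegree - c := by
  induction c with
  | zero => exact ⟨h, rfl⟩
  | succ c ih =>
    rw [Function.iterate_succ_apply']
    obtain ⟨ih1, ih2⟩ := ih
    obtain ⟨j1, j2⟩ := RR_derivative ih1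
    exact ⟨j1, by omega⟩

/-- core multiset inequality, Fin-indexed version -/
lemma coreF {K : ℕ} (hK : 2 ≤ K) (ν : Fin K → ℝ) (hnz : ∀ i, ν i ≠ 0)
    (h : E univ (K - 1) ν = 0) :
    E univ K ν * E univ (K - 2) ν ≤ 0 := by
  set b : Fin K → ℝ := fun i => (ν i)⁻¹ with hb
  have hprodt : ∀ t : Finset (Fin K), (∏ i, ν i) * ∏ i ∈ t, b i = ∏ i ∈ tᶜ, ν i := by
    intro t
    rw [← Finset.prod_mul_prod_compl t ν, mul_assoc, mul_comm (∏ i ∈ tᶜ, ν i),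
      ← mul_assoc, ← Finset.prod_mul_distrib]
    have : ∀ i ∈ t, ν i * b i = 1 := fun i _ => mul_inv_cancel₀ (hnz i)
    rw [Finset.prod_congr rfl this, Finset.prod_const_one, one_mul]
  have hcompl : ∀ j : ℕ, j ≤ K →
      E univ (K - j) ν = (∏ i, ν i) * E univ j b := by
    intro j hj
    rw [E, E, Finset.mul_sum]
    rw [Finset.sum_congr rfl fun t _ => hprodt t]
    refine (Finset.sum_nbij' (fun u => uᶜ) (fun t => tᶜ) ?_ ?_ ?_ ?_ ?_).symm
    · intro u hu
      rw [Finset.mem_powersetCard] at hu ⊢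
      refine ⟨Finset.subset_univ _, ?_⟩
      rw [Finset.card_compl, hu.2]
      simp
    · intro t ht
      rw [Finset.mem_powersetCard] at ht ⊢
      refine ⟨Finset.subset_univ _, ?_⟩
      rw [Finset.card_compl, ht.2]
      simp [Fintype.card_fin]
      omega
    · intro u _; exact compl_compl u
    · intro t _; exact compl_compl t
    · intro u _; rfl
  have hprod : (∏ i, ν i) ≠ 0 := Finset.prod_ne_zero_iff.2 fun i _ => hnz i
  have hsum : ∑ i, b i = 0 := by
    have := hcompl 1 (by omega)
    rw [h, E_one] at this
    rcases mul_eq_zero.1 this.symm with h' | h'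
    · exact absurd h' hprod
    · exact h'
  have hEK : E univ K ν = ∏ i, ν i := by
    have := hcompl 0 (by omega)
    rw [Nat.sub_zero] at this
    rw [this, E_zero, mul_one]
  have hE2 : 2 * E univ 2 b = -∑ i, (b i) ^ 2 := by
    rw [E_two, hsum]; ring
  have hEK2 : E univ (K - 2) ν = (∏ i, ν i) * E univ 2 b :=
    hcompl 2 hK
  rw [hEK, hEK2]
  have hsq : 0 ≤ ∑ i, (b i) ^ 2 := Finset.sum_nonneg fun i _ => sq_nonneg _
  nlinarith [sq_nonneg (∏ i, ν i)]





/-- Multiset version of the core inequality. -/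
lemma core (N : Multiset ℝ) (hK : 2 ≤ Multiset.card N) (hnz : ∀ b ∈ N, b ≠ 0)
    (h : N.esymm (Multiset.card N - 1) = 0) :
    N.esymm (Multiset.card N) * N.esymm (Multiset.card N - 2) ≤ 0 := by
  induction N using Quotient.inductionOn with
  | h l =>
    simp only [Multiset.quot_mk_to_coe, Multiset.quot_mk_to_coe', Multiset.quot_mk_to_coe''] at h hK hnz ⊢
    have hmap : (Finset.univ.val.map l.get) = (l : Multiset ℝ) := by
      rw [Fin.univ_val_map, List.ofFn_get]
    have hcard : Multiset.card (l : Multiset ℝ) = l.length := Multiset.coe_card l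
    have hesymm : ∀ j, (l : Multiset ℝ).esymm j = E univ j l.get := by
      intro j
      rw [← hmap, Finset.esymm_map_val]
      rfl
    rw [hcard] at h hK ⊢
    rw [hesymm] at h ⊢
    rw [hesymm]
    refine coreF hK l.get (fun i => hnz _ ?_) h
    rw [← hmap]
    exact Multiset.mem_map_of_mem _ (Finset.mem_univ i)

/-- Newton-type degenerate inequality. -/
lemma newton {ι : Type} [DecidableEq ι] (s : Finset ι) (κ : ι → ℝ) {k : ℕ} (hk : 1 ≤ k)
    (h0 : E s k κ = 0) (h1 : 0 < E s (k - 1) κ) :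
    E s (k + 1) κ ≤ 0 := by
  by_contra hc
  push_neg at hc
  have hm : k + 1 ≤ s.card := le_card_of_E_pos hc
  set m := s.card with hmdef
  set P : ℝ[X] := ∏ i ∈ s, (Polynomial.X + Polynomial.C (κ i)) with hP
  have hPdeg : P.natDegree = m := natDegree_P s κ
  have hPne : P ≠ 0 := by
    intro hzero
    rw [hzero, Polynomial.natDegree_zero] at hPdeg
    omega
  have hfac : ∀ a : ℝ, Polynomial.X + Polynomial.C a = Polynomial.X - Polynomial.C (-a) := by
    intro a; rw [map_neg, sub_neg_eq_add]
  have hProots : P.roots = s.val.map (fun i => -κ i) := by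
    rw [hP, Polynomial.roots_prod _ _ (by rw [← hP]; exact hPne)]
    have hr : ∀ i : ι, (Polynomial.X + Polynomial.C (κ i)).roots = {-κ i} := fun i => by
      rw [hfac (κ i), Polynomial.roots_X_sub_C]
    simp only [hr]
    exact Multiset.bind_singleton (s := s.val) (fun i => -κ i)
  have hRR : RR P := by
    rw [RR, hProots, Multiset.card_map, hPdeg]
    rfl
  set c := m - (k + 1) with hcdef
  set q := Polynomial.derivative^[c] P with hq
  obtain ⟨hqRR, hqdeg⟩ := RR_iterate hRR c
  rw [← hq] at hqRR hqdeg
  have hqdeg' : q.natDegree = k + 1 := by rw [hqdeg, hPdeg]; omega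
  have hqcoeff : ∀ i : ℕ, q.coeff i = ((i + c).descFactorial c : ℝ) * P.coeff (i + c) := by
    intro i
    rw [hq, Polynomial.coeff_iterate_derivative, nsmul_eq_mul]
  have hdfpos : ∀ i : ℕ, (0:ℝ) < ((i + c).descFactorial c : ℝ) := by
    intro i
    have : (i + c).descFactorial c ≠ 0 := by
      rw [Ne, Nat.descFactorial_eq_zero_iff_lt]
      omega
    exact_mod_cast Nat.pos_of_ne_zero this
  have hP0 : P.coeff (0 + c) = E s (k + 1) κ := by
    rw [show 0 + c = m - (k + 1) by omega]; exact coeff_P κ hm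
  have hP1 : P.coeff (1 + c) = E s k κ := by
    rw [show 1 + c = m - k by omega]; exact coeff_P κ (by omega)
  have hP2 : P.coeff (2 + c) = E s (k - 1) κ := by
    rw [show 2 + c = m - (k - 1) by omega]; exact coeff_P κ (by omega)
  have hc0 : 0 < q.coeff 0 := by
    rw [hqcoeff 0, hP0]
    exact mul_pos (hdfpos 0) hc
  have hc1 : q.coeff 1 = 0 := by
    rw [hqcoeff 1, hP1, h0, mul_zero]
  have hc2 : 0 < q.coeff 2 := by
    rw [hqcoeff 2, hP2]
    exact mul_pos (hdfpos 2) h1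
  have hq0 : q ≠ 0 := by
    intro hzero
    rw [hzero, Polynomial.natDegree_zero] at hqdeg'
    omega
  have hsplit : Polynomial.Splits q := Polynomial.splits_iff_card_roots.2 hqRR
  have hfact : q = Polynomial.C q.leadingCoeff *
      (q.roots.map fun a => Polynomial.X - Polynomial.C a).prod :=
    hsplit.eq_prod_roots
  set N : Multiset ℝ := q.roots.map (fun a => -a) with hN
  have hNcard : Multiset.card N = k + 1 := by
    rw [hN, Multiset.card_map, hqRR, hqdeg']
  have hmm : (N.map fun b => Polynomial.X + Polynomial.C b)
      = q.roots.map fun a => Polynomial.X - Polynomial.C a := by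
    rw [hN, Multiset.map_map]
    apply Multiset.map_congr rfl
    intro a _
    rw [Function.comp_apply, hfac (-a), neg_neg]
  have hfact' : q = Polynomial.C q.leadingCoeff *
      (N.map fun b => Polynomial.X + Polynomial.C b).prod := by
    rw [hmm]; exact hfact
  have hcoeffN : ∀ j : ℕ, j ≤ k + 1 → q.coeff j = q.leadingCoeff * N.esymm (k + 1 - j) := by
    intro j hj
    have hrw : q.coeff j = (Polynomial.C q.leadingCoeff *
        (N.map fun b => Polynomial.X + Polynomial.C b).prod).coeff j := by
      rw [← hfact']
    rw [hrw, Polynomial.coeff_C_mul,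
      Multiset.prod_X_add_C_coeff N (by rw [hNcard]; exact hj), hNcard]
  have hlc : q.leadingCoeff ≠ 0 := Polynomial.leadingCoeff_ne_zero.2 hq0
  have e1 : N.esymm k = 0 := by
    have h' := hcoeffN 1 (by omega)
    rw [hc1, show k + 1 - 1 = k by omega] at h'
    rcases mul_eq_zero.1 h'.symm with h'' | h''
    · exact absurd h'' hlc
    · exact h''
  have e0 : 0 < q.leadingCoeff * N.esymm (k + 1) := by
    have h' := hcoeffN 0 (by omega)
    rw [Nat.sub_zero] at h'
    rw [← h']
    exact hc0
  have e2 : 0 < q.leadingCoeff * N.esymm (k - 1) := by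
    have h' := hcoeffN 2 (by omega)
    rw [show k + 1 - 2 = k - 1 by omega] at h'
    rw [← h']
    exact hc2
  have hnz : ∀ x ∈ N, x ≠ 0 := by
    intro x hx hx0
    rw [hN, Multiset.mem_map] at hx
    obtain ⟨a, ha, hax⟩ := hx
    have ha0 : a = 0 := by rw [hx0] at hax; linarith [hax]
    rw [ha0] at ha
    have : q.IsRoot 0 := (Polynomial.mem_roots'.1 ha).2
    rw [Polynomial.IsRoot, ← Polynomial.coeff_zero_eq_eval_zero] at this
    rw [this] at hc0
    exact lt_irrefl _ hc0
  have hcore := core N (by omega) hnz (by rw [hNcard, show k + 1 - 1 = k by omega]; exact e1)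
  rw [hNcard, show k + 1 - 2 = k - 1 by omega] at hcore
  nlinarith [mul_pos e0 e2, sq_nonneg q.leadingCoeff]





lemma main_lemma : ∀ (k : ℕ) {ι : Type} [DecidableEq ι] (s : Finset ι) (κ : ι → ℝ),
    G s k κ → ∀ i ∈ s, ∀ j : ℕ, j + 1 ≤ k → 0 < E (s.erase i) j κ := by
  intro k
  induction k with
  | zero => intro ι _ s κ _ i _ j hj; omega
  | succ k ih =>
    intro ι _ s κ hG i hi j hj
    rcases Nat.lt_or_ge (j + 1) (k + 1) with hjk | hjk
    · exact ih s κ (G_mono hG (Nat.le_succ k)) i hi j (by omega)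
    · have hjeq : j = k := by omega
      rcases Nat.eq_zero_or_pos j with rfl | hj1
      · rw [E_zero]; norm_num
      by_contra hcon
      push_neg at hcon
      have hcard : j + 1 ≤ s.card := le_card_of_E_pos (hG (j + 1) (by omega) (by omega))
      have hecard : (s.erase i).card = s.card - 1 := Finset.card_erase_of_mem hi
      set T : ℝ := 1 + ∑ x ∈ s, |κ x| with hT
      have hT0 : (0:ℝ) ≤ T := by positivity
      have hTpos : ∀ x ∈ s, 0 < κ x + T := by
        intro x hx
        have h1 : |κ x| ≤ ∑ y ∈ s, |κ y| :=
          Finset.single_le_sum (fun y _ => abs_nonneg (κ y)) hx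
        have h2 : -κ x ≤ |κ x| := neg_le_abs (κ x)
        rw [hT]; linarith
      obtain ⟨t1, ht1mem, ht1⟩ :
          ∃ t1 ∈ Set.Icc (0:ℝ) T, E (s.erase i) j (fun x => κ x + t1) = 0 := by
        set f : ℝ → ℝ :=
          fun t => ∑ u ∈ (s.erase i).powersetCard j, ∏ x ∈ u, (κ x + t) with hfdef
        have hcont : Continuous f := by
          refine continuous_finset_sum _ fun u _ => continuous_finset_prod _ fun x _ => ?_
          exact continuous_const.add continuous_id
        have hfT : 0 < f T := by
          have : 0 < E (s.erase i) j (fun x => κ x + T) :=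
            E_pos (fun x hx => hTpos x (Finset.erase_subset i s hx)) (by omega)
          exact this
        have hf0 : f 0 ≤ 0 := by
          have : f 0 = E (s.erase i) j κ := by
            rw [hfdef]
            simp only [add_zero]
            rfl
          rw [this]; exact hcon
        have hival := intermediate_value_Icc hT0 hcont.continuousOn
        have h0mem : (0:ℝ) ∈ Set.Icc (f 0) (f T) := ⟨hf0, hfT.le⟩
        obtain ⟨t1, ht1, hft1⟩ := hival h0mem
        exact ⟨t1, ht1, hft1⟩
      set ν : ι → ℝ := fun x => κ x + t1 with hν
      have hGν : G s (k + 1) ν := G_shift hG ht1mem.1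
      have h1 : 0 < E (s.erase i) (j - 1) ν := by
        refine ih s ν (G_mono hGν (Nat.le_succ k)) i hi (j - 1) (by omega)
      have hsum : E s (j + 1) ν = E (s.erase i) (j + 1) ν + ν i * E (s.erase i) j ν := by
        conv_lhs => rw [← Finset.insert_erase hi]
        exact E_insert (Finset.notMem_erase i s) j ν
      have hE0 : E (s.erase i) j ν = 0 := ht1
      have hpos : 0 < E (s.erase i) (j + 1) ν := by
        have h' := hGν (j + 1) (by omega) (by omega)
        rw [hsum, hE0, mul_zero, add_zero] at h'
        exact h'
      have hnewt := newton (s.erase i) ν (by omega : 1 ≤ j) hE0 h1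
      linarith



end Stmt8Aux

/-- If `κ ∈ Γ_k` and `κ i ≥ κ j`, then `σ_{k-1}(κ|i) ≤ σ_{k-1}(κ|j)`; in particular,
if `κ` is ordered decreasingly, then `σ_{k-1}(κ|1) ≤ σ_{k-1}(κ|i)` for every `i`. -/
theorem stmt_8 (n k : ℕ) (hn : 2 ≤ n) (hk1 : 2 ≤ k) (hk2 : k ≤ n)
    (κ : Fin n → ℝ) (hκ : κ ∈ GardingCone k) :
    (∀ i j : Fin n, κ j ≤ κ i → esymmDel (k - 1) κ i ≤ esymmDel (k - 1) κ j) ∧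
    (Antitone κ → ∀ i : Fin n,
      esymmDel (k - 1) κ ⟨0, by omega⟩ ≤ esymmDel (k - 1) κ i) := by
  classical
  have hG : Stmt8Aux.G Finset.univ k κ := fun j h1 h2 => hκ j h1 h2
  have part1 : ∀ i j : Fin n, κ j ≤ κ i → esymmDel (k - 1) κ i ≤ esymmDel (k - 1) κ j := by
    intro i j hij
    rcases eq_or_ne i j with rfl | hne
    · exact le_refl _
    have hGdel : Stmt8Aux.G (Finset.univ.erase i) (k - 1) κ := fun m hm1 hm2 =>
      Stmt8Aux.main_lemma k Finset.univ κ hG i (Finset.mem_univ i) m (by omega)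
    have hpos : 0 < Stmt8Aux.E ((Finset.univ.erase i).erase j) (k - 2) κ :=
      Stmt8Aux.main_lemma (k - 1) (Finset.univ.erase i) κ hGdel j
        (Finset.mem_erase.2 ⟨hne.symm, Finset.mem_univ j⟩) (k - 2) (by omega)
    have hci : ({i} : Finset (Fin n))ᶜ = Finset.univ.erase i := Finset.compl_singleton i
    have hDD : (({i} : Finset (Fin n))ᶜ).erase j = (({j} : Finset (Fin n))ᶜ).erase i := by
      ext x
      simp only [Finset.mem_erase, Finset.mem_compl, Finset.mem_singleton]
      tauto
    have hjmem : j ∈ ({i} : Finset (Fin n))ᶜ := by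
      simp [Finset.mem_compl, hne.symm]
    have himem : i ∈ ({j} : Finset (Fin n))ᶜ := by
      simp [Finset.mem_compl, hne]
    have E1 : Stmt8Aux.E (({i} : Finset (Fin n))ᶜ) ((k - 2) + 1) κ
        = Stmt8Aux.E ((({i} : Finset (Fin n))ᶜ).erase j) ((k - 2) + 1) κ
          + κ j * Stmt8Aux.E ((({i} : Finset (Fin n))ᶜ).erase j) (k - 2) κ := by
      conv_lhs => rw [← Finset.insert_erase hjmem]
      exact Stmt8Aux.E_insert (Finset.notMem_erase j _) (k - 2) κ
    have E2 : Stmt8Aux.E (({j} : Finset (Fin n))ᶜ) ((k - 2) + 1) κ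
        = Stmt8Aux.E ((({j} : Finset (Fin n))ᶜ).erase i) ((k - 2) + 1) κ
          + κ i * Stmt8Aux.E ((({j} : Finset (Fin n))ᶜ).erase i) (k - 2) κ := by
      conv_lhs => rw [← Finset.insert_erase himem]
      exact Stmt8Aux.E_insert (Finset.notMem_erase i _) (k - 2) κ
    rw [← hDD] at E2
    have hpos' : 0 < Stmt8Aux.E ((({i} : Finset (Fin n))ᶜ).erase j) (k - 2) κ := by
      rw [hci]; exact hpos
    have hd1 : esymmDel (k - 1) κ i = Stmt8Aux.E (({i} : Finset (Fin n))ᶜ) ((k - 2) + 1) κ := by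
      rw [show k - 2 + 1 = k - 1 by omega]; rfl
    have hd2 : esymmDel (k - 1) κ j = Stmt8Aux.E (({j} : Finset (Fin n))ᶜ) ((k - 2) + 1) κ := by
      rw [show k - 2 + 1 = k - 1 by omega]; rfl
    have hmul : 0 ≤ (κ i - κ j) * Stmt8Aux.E ((({i} : Finset (Fin n))ᶜ).erase j) (k - 2) κ :=
      mul_nonneg (by linarith) hpos'.le
    rw [hd1, hd2, E1, E2]
    nlinarith [hmul]
  refine ⟨part1, fun hanti i => ?_⟩
  refine part1 ⟨0, by omega⟩ i (hanti ?_)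
  simp [Fin.le_def]
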